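/- Let G be a group-groupoid acting on a group A via a group homomorphism w : A → Ob(G), where the underlying groupoid action satisfies the interchange law (a∘g)(b∘h) = (ab)∘(gh) whenever both sides are defined. Then the action groupoid A ⋊ G, with group structure (a,g)(c,k) = (ac, gk) on arrows, is a group-groupoid, and the projection p : A ⋊ G → G is a morphism of group-groupoids that is a covering morphism of the underlying groupoids. -/

import Mathlib

universe u v

structure GroupGroupoid where
  Obj : Type u
  Arr : Type v
  [objGroup : Group Obj]
  [arrGroup : Group Arr]
  src : Arr →* Obj
  tgt : Arr →* Obj
  ident : Obj →* Arr
  comp : (a b : Arr) → tgt a = src b → Arr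
  ginv : Arr → Arr
  src_ident : ∀ x, src (ident x) = x
  tgt_ident : ∀ x, tgt (ident x) = x
  src_comp : ∀ a b h, src (comp a b h) = src a
  tgt_comp : ∀ a b h, tgt (comp a b h) = tgt b
  ident_comp : ∀ (a : Arr) (h : tgt (ident (src a)) = src a), comp (ident (src a)) a h = a
  comp_ident : ∀ (a : Arr) (h : tgt a = src (ident (tgt a))), comp a (ident (tgt a)) h = a
  comp_assoc : ∀ (a b c : Arr) (h1 : tgt a = src b) (h2 : tgt (comp a b h1) = src c)
    (h3 : tgt b = src c) (h4 : tgt a = src (comp b c h3)),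
    comp (comp a b h1) c h2 = comp a (comp b c h3) h4
  src_ginv : ∀ a, src (ginv a) = tgt a
  tgt_ginv : ∀ a, tgt (ginv a) = src a
  comp_ginv : ∀ (a : Arr) (h : tgt a = src (ginv a)), comp a (ginv a) h = ident (src a)
  ginv_comp : ∀ (a : Arr) (h : tgt (ginv a) = src a), comp (ginv a) a h = ident (tgt a)
  comp_mul : ∀ (a b c d : Arr) (h1 : tgt a = src b) (h2 : tgt c = src d)
    (h3 : tgt (a * c) = src (b * d)), comp (a * c) (b * d) h3 = comp a b h1 * comp c d h2

attribute [instance] GroupGroupoid.objGroup GroupGroupoid.arrGroup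

universe w

/-- An action of a group-groupoid `G` on a group `A` via a group morphism
`w : A → Ob(G)`: a groupoid action on the underlying set satisfying the
interchange law `(a ∘ g)(b ∘ k) = (ab) ∘ (gk)`. -/
structure GGAction (G : GroupGroupoid) where
  A : Type w
  [grpA : Group A]
  w : A →* G.Obj
  act : (a : A) → (g : G.Arr) → w a = G.src g → A
  w_act : ∀ a g h, w (act a g h) = G.tgt g
  act_ident : ∀ (a : A) (h : w a = G.src (G.ident (w a))), act a (G.ident (w a)) h = a
  act_comp : ∀ (a : A) (g g' : G.Arr) (h1 : G.tgt g = G.src g')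
    (h2 : w a = G.src (G.comp g g' h1)) (h3 : w a = G.src g)
    (h4 : w (act a g h3) = G.src g'),
    act a (G.comp g g' h1) h2 = act (act a g h3) g' h4
  interchange : ∀ (a b : A) (g k : G.Arr) (h1 : w a = G.src g) (h2 : w b = G.src k)
    (h3 : w (a * b) = G.src (g * k)),
    act (a * b) (g * k) h3 = act a g h1 * act b k h2

attribute [instance] GGAction.grpA

variable (G : GroupGroupoid) (α : GGAction G)

/-- Arrows of the action groupoid `A ⋊ G`. -/
def AGArr := {p : α.A × G.Arr // α.w p.1 = G.src p.2}

instance : Mul (AGArr G α) :=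
  ⟨fun p q => ⟨(p.1.1 * q.1.1, p.1.2 * q.1.2), by rw [map_mul, map_mul, p.2, q.2]⟩⟩
instance : One (AGArr G α) := ⟨⟨(1, 1), by rw [map_one, map_one]⟩⟩
instance : Inv (AGArr G α) :=
  ⟨fun p => ⟨(p.1.1⁻¹, p.1.2⁻¹), by rw [map_inv, map_inv, p.2]⟩⟩

/-- Source in the action groupoid. -/
def agsrc (p : AGArr G α) : α.A := p.1.1
/-- Target in the action groupoid: `(a, g) ↦ a ∘ g`. -/
def agtgt (p : AGArr G α) : α.A := α.act p.1.1 p.1.2 p.2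
/-- Identities in the action groupoid. -/
def agident (a : α.A) : AGArr G α := ⟨(a, G.ident (α.w a)), (G.src_ident _).symm⟩
/-- Composition in the action groupoid. -/
def agcomp (p q : AGArr G α) (h : agtgt G α p = agsrc G α q) : AGArr G α :=
  ⟨(p.1.1, G.comp p.1.2 q.1.2
      (by exact ((α.w_act p.1.1 p.1.2 p.2).symm.trans ((congrArg α.w h).trans q.2)))),
    by rw [G.src_comp]; exact p.2⟩
/-- Groupoid inversion in the action groupoid. -/
def agginv (p : AGArr G α) : AGArr G α :=
  ⟨(agtgt G α p, G.ginv p.1.2), by rw [G.src_ginv]; exact α.w_act _ _ _⟩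

theorem act_congr {a a' : α.A} {g g' : G.Arr} (ha : a = a') (hg : g = g')
    (h : α.w a = G.src g) (h' : α.w a' = G.src g') :
    α.act a g h = α.act a' g' h' := by subst ha; subst hg; rfl

theorem comp_congr {a a' b b' : G.Arr} (ha : a = a') (hb : b = b')
    (h : G.tgt a = G.src b) (h' : G.tgt a' = G.src b') :
    G.comp a b h = G.comp a' b' h' := by subst ha; subst hb; rfl

theorem AGArr.ext {p q : AGArr G α} (h1 : p.1.1 = q.1.1) (h2 : p.1.2 = q.1.2) : p = q :=
  Subtype.ext (Prod.ext h1 h2)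

/-- For a group-groupoid `G` acting on a group `A`, the action groupoid `A ⋊ G`,
with group structure `(a,g)(c,k) = (ac, gk)`, is a group-groupoid, and the
projection `A ⋊ G → G` is a morphism of group-groupoids which is a covering
morphism of the underlying groupoids. -/
theorem action_group_groupoid_projection_is_covering :
    -- the arrows form a group
    (∀ p q r : AGArr G α, p * q * r = p * (q * r)) ∧
    (∀ p : AGArr G α, 1 * p = p) ∧ (∀ p : AGArr G α, p * 1 = p) ∧
    (∀ p : AGArr G α, p⁻¹ * p = 1) ∧
    -- source, target and identity are group homomorphisms
    (∀ p q : AGArr G α, agsrc G α (p * q) = agsrc G α p * agsrc G α q) ∧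
    (agsrc G α (1 : AGArr G α) = 1) ∧
    (∀ p q : AGArr G α, agtgt G α (p * q) = agtgt G α p * agtgt G α q) ∧
    (agtgt G α (1 : AGArr G α) = 1) ∧
    (∀ a b : α.A, agident G α (a * b) = agident G α a * agident G α b) ∧
    -- A ⋊ G is a groupoid
    (∀ a : α.A, agsrc G α (agident G α a) = a) ∧
    (∀ a : α.A, agtgt G α (agident G α a) = a) ∧
    (∀ (p q : AGArr G α) (h : agtgt G α p = agsrc G α q),
      agsrc G α (agcomp G α p q h) = agsrc G α p) ∧
    (∀ (p q : AGArr G α) (h : agtgt G α p = agsrc G α q),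
      agtgt G α (agcomp G α p q h) = agtgt G α q) ∧
    (∀ (p : AGArr G α) (h : agtgt G α (agident G α (agsrc G α p)) = agsrc G α p),
      agcomp G α (agident G α (agsrc G α p)) p h = p) ∧
    (∀ (p : AGArr G α) (h : agtgt G α p = agsrc G α (agident G α (agtgt G α p))),
      agcomp G α p (agident G α (agtgt G α p)) h = p) ∧
    (∀ (p q r : AGArr G α) (h1 : agtgt G α p = agsrc G α q)
      (h2 : agtgt G α (agcomp G α p q h1) = agsrc G α r)
      (h3 : agtgt G α q = agsrc G α r)
      (h4 : agtgt G α p = agsrc G α (agcomp G α q r h3)),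
      agcomp G α (agcomp G α p q h1) r h2 = agcomp G α p (agcomp G α q r h3) h4) ∧
    (∀ p : AGArr G α, agsrc G α (agginv G α p) = agtgt G α p) ∧
    (∀ p : AGArr G α, agtgt G α (agginv G α p) = agsrc G α p) ∧
    (∀ (p : AGArr G α) (h : agtgt G α p = agsrc G α (agginv G α p)),
      agcomp G α p (agginv G α p) h = agident G α (agsrc G α p)) ∧
    (∀ (p : AGArr G α) (h : agtgt G α (agginv G α p) = agsrc G α p),
      agcomp G α (agginv G α p) p h = agident G α (agtgt G α p)) ∧
    -- interchange law: composition is a group homomorphism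
    (∀ (p q r s : AGArr G α) (h1 : agtgt G α p = agsrc G α q)
      (h2 : agtgt G α r = agsrc G α s)
      (h3 : agtgt G α (p * r) = agsrc G α (q * s)),
      agcomp G α (p * r) (q * s) h3 = agcomp G α p q h1 * agcomp G α r s h2) ∧
    -- the projection is a morphism of group-groupoids over w
    (∀ p q : AGArr G α, (p * q).1.2 = p.1.2 * q.1.2) ∧
    ((1 : AGArr G α).1.2 = 1) ∧
    (∀ p : AGArr G α, G.src p.1.2 = α.w (agsrc G α p)) ∧
    (∀ p : AGArr G α, G.tgt p.1.2 = α.w (agtgt G α p)) ∧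
    (∀ a : α.A, (agident G α a).1.2 = G.ident (α.w a)) ∧
    (∀ (p q : AGArr G α) (h : agtgt G α p = agsrc G α q)
      (h' : G.tgt p.1.2 = G.src q.1.2),
      (agcomp G α p q h).1.2 = G.comp p.1.2 q.1.2 h') ∧
    -- and it is a covering morphism of the underlying groupoids
    (∀ a : α.A, Function.Bijective
      (fun p : {p : AGArr G α // agsrc G α p = a} =>
        (⟨p.1.1.2, by rw [← p.1.2]; exact congrArg α.w p.2⟩ :
          {g : G.Arr // G.src g = α.w a}))) := by
  refine ⟨?_, ?_, ?_, ?_, ?_, ?_, ?_, ?_, ?_, ?_, ?_, ?_, ?_, ?_, ?_, ?_, ?_, ?_, ?_, ?_, ?_,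
    ?_, ?_, ?_, ?_, ?_, ?_, ?_⟩
  · intro p q r; exact AGArr.ext G α (mul_assoc _ _ _) (mul_assoc _ _ _)
  · intro p; exact AGArr.ext G α (one_mul _) (one_mul _)
  · intro p; exact AGArr.ext G α (mul_one _) (mul_one _)
  · intro p; exact AGArr.ext G α (inv_mul_cancel _) (inv_mul_cancel _)
  · intro p q; rfl
  · rfl
  · intro p q
    exact α.interchange p.1.1 q.1.1 p.1.2 q.1.2 p.2 q.2 _
  · show α.act 1 1 _ = 1
    have h : α.w (1 : α.A) = G.src (G.ident (α.w 1)) := (G.src_ident _).symm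
    rw [act_congr G α rfl (by rw [map_one, map_one]) _ h, α.act_ident]
  · intro a b
    refine AGArr.ext G α rfl ?_
    show G.ident (α.w (a * b)) = G.ident (α.w a) * G.ident (α.w b)
    rw [map_mul, map_mul]
  · intro a; rfl
  · intro a
    show α.act a (G.ident (α.w a)) _ = a
    exact α.act_ident a _
  · intro p q h; rfl
  · intro p q h
    show α.act p.1.1 (G.comp p.1.2 q.1.2 _) _ = α.act q.1.1 q.1.2 q.2
    erw [α.act_comp p.1.1 p.1.2 q.1.2 _ _ p.2
      (by exact (congrArg α.w h).trans q.2)]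
    exact act_congr G α h rfl _ _
  · intro p h
    refine AGArr.ext G α rfl ?_
    show G.comp (G.ident (α.w p.1.1)) p.1.2 _ = p.1.2
    erw [comp_congr G (congrArg G.ident p.2) rfl _
      (by rw [G.tgt_ident]), G.ident_comp]
  · intro p h
    refine AGArr.ext G α rfl ?_
    show G.comp p.1.2 (G.ident (α.w (agtgt G α p))) _ = p.1.2
    erw [comp_congr G rfl
      (show G.ident (α.w (agtgt G α p)) = G.ident (G.tgt p.1.2) from
        congrArg G.ident (α.w_act p.1.1 p.1.2 p.2)) _
      (by rw [G.src_ident]), G.comp_ident]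
  · intro p q r h1 h2 h3 h4
    refine AGArr.ext G α rfl ?_
    exact G.comp_assoc _ _ _ _ _ _ _
  · intro p; rfl
  · intro p
    show α.act (α.act p.1.1 p.1.2 p.2) (G.ginv p.1.2) _ = p.1.1
    erw [← α.act_comp p.1.1 p.1.2 (G.ginv p.1.2) (G.src_ginv _).symm
      (by rw [G.src_comp]; exact p.2) p.2 _]
    rw [act_congr G α rfl (G.comp_ginv p.1.2 _) _ (by rw [G.src_ident]; exact p.2 ▸ rfl)]
    rw [act_congr G α rfl (congrArg G.ident p.2.symm) _ (G.src_ident _).symm]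
    exact α.act_ident p.1.1 _
  · intro p h
    refine AGArr.ext G α rfl ?_
    show G.comp p.1.2 (G.ginv p.1.2) _ = G.ident (α.w p.1.1)
    erw [G.comp_ginv, p.2]
  · intro p h
    refine AGArr.ext G α rfl ?_
    show G.comp (G.ginv p.1.2) p.1.2 _ = G.ident (α.w (agtgt G α p))
    erw [G.ginv_comp]
    exact congrArg G.ident (α.w_act p.1.1 p.1.2 p.2).symm
  · intro p q r s h1 h2 h3
    refine AGArr.ext G α rfl ?_
    exact G.comp_mul p.1.2 q.1.2 r.1.2 s.1.2 _ _ _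
  · intro p q; rfl
  · rfl
  · intro p; exact p.2.symm
  · intro p; exact (α.w_act p.1.1 p.1.2 p.2).symm
  · intro a; rfl
  · intro p q h h'; rfl
  · intro a
    constructor
    · rintro ⟨⟨⟨a1, g1⟩, hp⟩, hp1⟩ ⟨⟨⟨a2, g2⟩, hq⟩, hq1⟩ h
      have hg : g1 = g2 := congrArg Subtype.val h
      have ha : a1 = a2 := hp1.trans hq1.symm
      subst hg; subst ha; rfl
    · rintro ⟨g, hg⟩
      exact ⟨⟨⟨(a, g), hg.symm⟩, rfl⟩, rfl⟩
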